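/- Let V : ℝ³ → ℝ be continuously differentiable with bounded gradient ∇V, and let u be a Schwartz function on ℝ³×ℝ³. Then for all (x,v) ∈ ℝ³×ℝ³: Θ[V]u(x,v) = div_v( Γ[∇V]u )(x,v), where Θ[V]u(x,v) := i (2π)^{-3/2} ∫_{ℝ³} (V(x+η/2) − V(x−η/2)) (F_{v→η}u)(x,η) e^{i v·η} dη and Γ[∇V]u(x,v) := F^{-1}_{η→v}( W(x,η) (F_{v→η}u)(x,η) ) with W(x,η) := ∫_{−1/2}^{1/2} ∇V(x − rη) dr. In particular V(x+η/2) − V(x−η/2) = η · W(x,η) for all x, η. -/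

import Mathlib

open MeasureTheory Real Filter ENNReal RealInnerProductSpace

noncomputable section

abbrev E3 := EuclideanSpace ℝ (Fin 3)

/-- The `i`-th standard basis vector of `ℝ³`. -/
def e3 (i : Fin 3) : E3 := EuclideanSpace.single i 1

/-- `W(x,η) = ∫_{−1/2}^{1/2} E(x − rη) dr` for a vector field `E`. -/
def Wfield (E : E3 → E3) (x η : E3) : E3 :=
  ∫ r in (-(1/2) : ℝ)..(1/2 : ℝ), E (x - r • η)

/-- Partial Fourier transform in the velocity variable. -/
def fourierV (u : E3 × E3 → ℝ) (x η : E3) : ℂ :=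
  ((2 * π : ℝ) ^ (-(3:ℝ)/2) : ℝ) *
    ∫ v : E3, (u (x, v) : ℂ) * Complex.exp (-(Complex.I) * ((⟪v, η⟫ : ℝ) : ℂ))

/-- The `k`-th component of `Γ[E]u(x,v) = F⁻¹_{η→v}( W(x,η) (F_{v→η}u)(x,η) )`. -/
def Gamma (E : E3 → E3) (u : E3 × E3 → ℝ) (k : Fin 3) (x v : E3) : ℂ :=
  ((2 * π : ℝ) ^ (-(3:ℝ)/2) : ℝ) *
    ∫ η : E3, ((Wfield E x η k : ℝ) : ℂ) * fourierV u x η *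
      Complex.exp (Complex.I * ((⟪v, η⟫ : ℝ) : ℂ))

/-- The pseudo-differential operator
`Θ[V]u(x,v) = i (2π)^{-3/2} ∫ (V(x+η/2) − V(x−η/2)) (F_{v→η}u)(x,η) e^{i v·η} dη`. -/
def Theta (V : E3 → ℝ) (u : E3 × E3 → ℝ) (x v : E3) : ℂ :=
  Complex.I * ((2 * π : ℝ) ^ (-(3:ℝ)/2) : ℝ) *
    ∫ η : E3, ((V (x + (2:ℝ)⁻¹ • η) - V (x - (2:ℝ)⁻¹ • η) : ℝ) : ℂ) *
      fourierV u x η * Complex.exp (Complex.I * ((⟪v, η⟫ : ℝ) : ℂ))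

/-! ### Auxiliary material -/

set_option maxHeartbeats 1000000
set_option synthInstance.maxHeartbeats 200000

lemma htg_pair (x : E3) : Function.HasTemperateGrowth (fun v : E3 => ((x, v) : E3 × E3)) := by
  apply Function.HasTemperateGrowth.of_fderiv (k := 1) (C := ‖x‖ + 1)
  · have h : (fderiv ℝ (fun v : E3 => ((x, v) : E3 × E3))) =
        fun _ => ContinuousLinearMap.inr ℝ E3 E3 := by
      funext v
      exact (hasFDerivAt_prodMk_right x v).fderiv
    rw [h]
    exact Function.HasTemperateGrowth.const _
  · exact (differentiable_const x).prodMk differentiable_id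
  · intro v
    have : ‖((x, v) : E3 × E3)‖ ≤ ‖x‖ + ‖v‖ := by
      rw [Prod.norm_def]
      exact max_le (by simp [norm_nonneg]) (by simp [norm_nonneg])
    nlinarith [norm_nonneg v, norm_nonneg x, this]

/-- Restriction of a Schwartz function on `ℝ³×ℝ³` to a slice in the second variable. -/
def restrictS (u : SchwartzMap (E3 × E3) ℝ) (x : E3) : SchwartzMap E3 ℝ :=
  SchwartzMap.compCLM ℝ (htg_pair x)
    ⟨1, 1, fun v => by
      have : ‖v‖ ≤ ‖((x, v) : E3 × E3)‖ := by rw [Prod.norm_def]; exact le_max_right _ _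
      simpa using this.trans (by nlinarith [norm_nonneg ((x,v) : E3 × E3), show ‖((x, v) : E3 × E3)‖ ≤ max ‖x‖ ‖v‖ from le_of_eq (by rw [Prod.norm_def])])⟩ u

/-- Complexification of a real Schwartz function. -/
def cplx : SchwartzMap E3 ℝ →L[ℝ] SchwartzMap E3 ℂ :=
  SchwartzMap.bilinLeftCLM (ContinuousLinearMap.lsmul ℝ ℝ : ℝ →L[ℝ] ℂ →L[ℝ] ℂ)
    (Function.HasTemperateGrowth.const (1 : ℂ))

lemma cplx_apply (f : SchwartzMap E3 ℝ) (v : E3) : cplx f v = (f v : ℂ) := by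
  show (f v : ℝ) • (1 : ℂ) = _
  simp

def scaleCLE : E3 ≃L[ℝ] E3 :=
  (LinearEquiv.smulOfNeZero ℝ E3 ((2 * π)⁻¹) (by positivity)).toContinuousLinearEquiv

/-- The (suitably scaled) partial Fourier transform of `u` in `v`, as a Schwartz function. -/
def psiS (u : SchwartzMap (E3 × E3) ℝ) (x : E3) : SchwartzMap E3 ℂ :=
  SchwartzMap.compCLMOfContinuousLinearEquiv ℝ scaleCLE
    (SchwartzMap.fourierTransformCLM ℝ (cplx (restrictS u x)))

lemma psiS_apply (u : SchwartzMap (E3 × E3) ℝ) (x η : E3) :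
    psiS u x η = FourierTransform.fourier (fun v => ((u (x, v) : ℝ) : ℂ)) ((2 * π)⁻¹ • η) := by
  show FourierTransform.fourier (⇑(cplx (restrictS u x))) (scaleCLE η) = _
  have h1 : ⇑(cplx (restrictS u x)) = fun v => ((u (x, v) : ℝ) : ℂ) :=
    funext fun v => cplx_apply _ v
  have h2 : scaleCLE η = (2 * π)⁻¹ • η := rfl
  rw [h1, h2]

lemma fourierV_eq_psiS (u : SchwartzMap (E3 × E3) ℝ) (x η : E3) :
    fourierV (⇑u) x η = (((2 * π : ℝ) ^ (-(3:ℝ)/2) : ℝ) : ℂ) * psiS u x η := by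
  rw [fourierV, psiS_apply, Real.fourier_eq']
  congr 1
  refine congrArg (fun f : E3 → ℂ => ∫ v : E3, f v) (funext fun v => ?_)
  rw [smul_eq_mul, mul_comm]
  congr 1
  rw [real_inner_smul_right]
  rw [show -2 * π * ((2 * π)⁻¹ * ⟪v, η⟫) = -⟪v, η⟫ by
    have h2π : (2 * π) ≠ 0 := by positivity
    field_simp]
  push_cast
  ring

lemma coord_le_norm (w : E3) (k : Fin 3) : |w k| ≤ ‖w‖ := by
  have h := norm_inner_le_norm (𝕜 := ℝ) (EuclideanSpace.single k (1:ℝ)) w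
  rw [EuclideanSpace.inner_single_left] at h
  simpa [EuclideanSpace.norm_single] using h

lemma coord_cont (k : Fin 3) : Continuous fun w : E3 => w k :=
  (continuous_apply k).comp (PiLp.continuous_ofLp 2 fun _ : Fin 3 => ℝ)

lemma Lnorm_le (η : E3) : ‖(Complex.ofRealCLM.comp (innerSL ℝ η) : E3 →L[ℝ] ℂ)‖ ≤ ‖η‖ := by
  apply ContinuousLinearMap.opNorm_le_bound _ (norm_nonneg η)
  intro m
  have h : (Complex.ofRealCLM.comp (innerSL ℝ η) : E3 →L[ℝ] ℂ) m = ((⟪η, m⟫ : ℝ) : ℂ) := rfl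
  rw [h, Complex.norm_real, Real.norm_eq_abs]
  exact abs_real_inner_le_norm η m

lemma L_cont : Continuous fun η : E3 => (Complex.ofRealCLM.comp (innerSL ℝ η) : E3 →L[ℝ] ℂ) :=
  (ContinuousLinearMap.compL ℝ E3 ℝ ℂ Complex.ofRealCLM).continuous.comp (innerSL ℝ).continuous

lemma expnorm (w η : E3) : ‖Complex.exp (Complex.I * ((⟪w, η⟫ : ℝ) : ℂ))‖ = 1 := by
  rw [mul_comm]; exact Complex.norm_exp_ofReal_mul_I _

lemma exp_cont (w : E3) :
    Continuous fun η : E3 => Complex.exp (Complex.I * ((⟪w, η⟫ : ℝ) : ℂ)) :=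
  Complex.continuous_exp.comp (continuous_const.mul
    (Complex.continuous_ofReal.comp (continuous_const.inner continuous_id)))

lemma osc_pt (aη : ℂ) (η w : E3) :
    HasFDerivAt (fun w' : E3 => aη * Complex.exp (Complex.I * ((⟪w', η⟫ : ℝ) : ℂ)))
      ((aη * Complex.exp (Complex.I * ((⟪w, η⟫ : ℝ) : ℂ)) * Complex.I) •
        (Complex.ofRealCLM.comp (innerSL ℝ η) : E3 →L[ℝ] ℂ)) w := by
  have base : HasFDerivAt (fun w' : E3 => ((⟪w', η⟫ : ℝ) : ℂ))
      (Complex.ofRealCLM.comp (innerSL ℝ η) : E3 →L[ℝ] ℂ) w := by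
    have h1 : HasFDerivAt (fun w' : E3 => (⟪η, w'⟫ : ℝ)) (innerSL ℝ η) w :=
      (innerSL ℝ η).hasFDerivAt
    have h2 := (Complex.ofRealCLM.hasFDerivAt (x := (⟪η, w⟫ : ℝ))).comp w h1
    have h3 : (fun w' : E3 => ((⟪w', η⟫ : ℝ) : ℂ))
        = (Complex.ofRealCLM ∘ fun w' : E3 => (⟪η, w'⟫ : ℝ)) := by
      funext w'
      rw [real_inner_comm η w']
      rfl
    rw [h3]
    exact h2
  have step2 : HasFDerivAt (fun w' : E3 => Complex.I * ((⟪w', η⟫ : ℝ) : ℂ))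
      (Complex.I • (Complex.ofRealCLM.comp (innerSL ℝ η) : E3 →L[ℝ] ℂ)) w :=
    base.const_mul Complex.I
  have step3 := (Complex.hasDerivAt_exp (Complex.I * ((⟪w, η⟫ : ℝ) : ℂ))).comp_hasFDerivAt w step2
  have step4 := step3.const_mul aη
  have heq : (aη * Complex.exp (Complex.I * ((⟪w, η⟫ : ℝ) : ℂ)) * Complex.I) •
        (Complex.ofRealCLM.comp (innerSL ℝ η) : E3 →L[ℝ] ℂ)
      = aη • (Complex.exp (Complex.I * ((⟪w, η⟫ : ℝ) : ℂ)) •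
          (Complex.I • (Complex.ofRealCLM.comp (innerSL ℝ η) : E3 →L[ℝ] ℂ))) := by
    rw [smul_smul, smul_smul, mul_assoc]
  rw [heq]
  exact step4

lemma osc_integrable (a : E3 → ℂ) (ha : Continuous a) (b : E3 → ℝ)
    (hab : ∀ η, ‖a η‖ ≤ b η)
    (hb1 : Integrable (fun η : E3 => b η * ‖η‖)) (v : E3) :
    Integrable (fun η : E3 =>
      (a η * Complex.exp (Complex.I * ((⟪v, η⟫ : ℝ) : ℂ)) * Complex.I) •
        (Complex.ofRealCLM.comp (innerSL ℝ η) : E3 →L[ℝ] ℂ)) := by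
  apply hb1.mono'
  · exact (((ha.mul (exp_cont v)).mul continuous_const).smul L_cont).aestronglyMeasurable
  · filter_upwards with η
    refine (norm_smul_le (a η * Complex.exp (Complex.I * ((⟪v, η⟫ : ℝ) : ℂ)) * Complex.I)
      (Complex.ofRealCLM.comp (innerSL ℝ η) : E3 →L[ℝ] ℂ)).trans ?_
    rw [norm_mul, norm_mul, expnorm, Complex.norm_I, mul_one, mul_one]
    have h1 : 0 ≤ b η := (norm_nonneg _).trans (hab η)
    exact mul_le_mul (hab η) (Lnorm_le η) (norm_nonneg _) h1

lemma osc_hasFDerivAt (a : E3 → ℂ) (ha : Continuous a) (b : E3 → ℝ) (hb : Integrable b)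
    (hab : ∀ η, ‖a η‖ ≤ b η)
    (hb1 : Integrable (fun η : E3 => b η * ‖η‖)) (v : E3) :
    HasFDerivAt (fun w : E3 => ∫ η : E3, a η * Complex.exp (Complex.I * ((⟪w, η⟫ : ℝ) : ℂ)))
      (∫ η : E3, (a η * Complex.exp (Complex.I * ((⟪v, η⟫ : ℝ) : ℂ)) * Complex.I) •
        (Complex.ofRealCLM.comp (innerSL ℝ η) : E3 →L[ℝ] ℂ)) v := by
  apply hasFDerivAt_integral_of_dominated_of_fderiv_le (s := Metric.ball v 1) (Metric.ball_mem_nhds v (by norm_num : (0:ℝ) < 1))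
    (bound := fun η => b η * ‖η‖)
    (F' := fun w η => (a η * Complex.exp (Complex.I * ((⟪w, η⟫ : ℝ) : ℂ)) * Complex.I) •
      (Complex.ofRealCLM.comp (innerSL ℝ η) : E3 →L[ℝ] ℂ))
  · filter_upwards with w
    exact ((ha.mul (exp_cont w)).aestronglyMeasurable)
  · apply hb.mono'
    · exact (ha.mul (exp_cont v)).aestronglyMeasurable
    · filter_upwards with η
      rw [norm_mul, expnorm, mul_one]
      exact hab η
  · exact (((ha.mul (exp_cont v)).mul continuous_const).smul L_cont).aestronglyMeasurable
  · filter_upwards with η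
    intro w _
    refine (norm_smul_le (a η * Complex.exp (Complex.I * ((⟪w, η⟫ : ℝ) : ℂ)) * Complex.I)
      (Complex.ofRealCLM.comp (innerSL ℝ η) : E3 →L[ℝ] ℂ)).trans ?_
    rw [norm_mul, norm_mul, expnorm, Complex.norm_I, mul_one, mul_one]
    have h1 : 0 ≤ b η := (norm_nonneg _).trans (hab η)
    exact mul_le_mul (hab η) (Lnorm_le η) (norm_nonneg _) h1
  · exact hb1
  · filter_upwards with η
    intro w _
    exact osc_pt (a η) η w

/-- Lemma 4.4: `Θ[V]u = div_v(Γ[∇V]u)`, and `V(x+η/2) − V(x−η/2) = η·W(x,η)`. -/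
theorem theta_eq_div_gamma (V : E3 → ℝ) (hV : ContDiff ℝ 1 V)
    (hbd : BddAbove (Set.range fun x => ‖gradient V x‖))
    (u : SchwartzMap (E3 × E3) ℝ) :
    (∀ x v : E3,
      Theta V (⇑u) x v =
        ∑ k : Fin 3,
          fderiv ℝ (fun v' : E3 => Gamma (fun y => gradient V y) (⇑u) k x v') v (e3 k)) ∧
    (∀ x η : E3,
      V (x + (2:ℝ)⁻¹ • η) - V (x - (2:ℝ)⁻¹ • η) = ⟪η, Wfield (fun y => gradient V y) x η⟫) := by
  have hE : Continuous (fun y => gradient V y) := by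
    have h1 : Continuous (fderiv ℝ V) := hV.continuous_fderiv one_ne_zero
    exact (InnerProductSpace.toDual ℝ E3).symm.continuous.comp h1
  -- Part 2 : the fundamental theorem of calculus along the segment
  have h2 : ∀ x η : E3,
      V (x + (2:ℝ)⁻¹ • η) - V (x - (2:ℝ)⁻¹ • η)
        = ⟪η, Wfield (fun y => gradient V y) x η⟫ := by
    intro x η
    have hpath : Continuous fun r : ℝ => x - r • η := by fun_prop
    have hEc : Continuous fun r : ℝ => gradient V (x - r • η) := hE.comp hpath
    have hint : IntervalIntegrable (fun r : ℝ => gradient V (x - r • η)) volume (-(1/2)) (1/2) :=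
      hEc.intervalIntegrable _ _
    have hcomm : ⟪η, Wfield (fun y => gradient V y) x η⟫
        = ∫ r in (-(1/2) : ℝ)..(1/2 : ℝ), ⟪η, gradient V (x - r • η)⟫ := by
      rw [Wfield, show (inner ℝ η (∫ r in (-(1/2) : ℝ)..(1/2 : ℝ), gradient V (x - r • η)) : ℝ)
          = innerSL ℝ η (∫ r in (-(1/2) : ℝ)..(1/2 : ℝ), gradient V (x - r • η)) from rfl,
        ← ContinuousLinearMap.intervalIntegral_comp_comm (innerSL ℝ η) hint]
      rfl
    rw [hcomm]
    have hderiv : ∀ r ∈ Set.uIcc (-(1/2) : ℝ) (1/2 : ℝ),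
        HasDerivAt (fun r : ℝ => V (x - r • η)) (-⟪η, gradient V (x - r • η)⟫) r := by
      intro r _
      have hp : HasDerivAt (fun r : ℝ => x - r • η) (-η) r := by
        simpa using ((hasDerivAt_id r).smul_const η).const_sub x
      have hg : HasGradientAt V (gradient V (x - r • η)) (x - r • η) :=
        (hV.differentiable one_ne_zero _).hasGradientAt
      have hc := hg.hasFDerivAt.comp_hasDerivAt r hp
      refine hc.congr_deriv ?_
      have he : (InnerProductSpace.toDual ℝ E3) (gradient V (x - r • η)) (-η)
          = ⟪gradient V (x - r • η), -η⟫ := rfl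
      rw [he, inner_neg_right, real_inner_comm]
    have hint2 : IntervalIntegrable (fun r : ℝ => -⟪η, gradient V (x - r • η)⟫)
        volume (-(1/2)) (1/2) :=
      ((continuous_const.inner hEc)).neg.intervalIntegrable _ _
    have hftc := intervalIntegral.integral_eq_sub_of_hasDerivAt hderiv hint2
    rw [intervalIntegral.integral_neg] at hftc
    have h12 : V (x - (1/2:ℝ) • η) - V (x - (-(1/2):ℝ) • η)
        = -∫ r in (-(1/2) : ℝ)..(1/2 : ℝ), ⟪η, gradient V (x - r • η)⟫ := hftc.symm
    have e1 : x - (-(1/2):ℝ) • η = x + (2:ℝ)⁻¹ • η := by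
      rw [neg_smul, sub_neg_eq_add]; norm_num
    have e2 : x - (1/2:ℝ) • η = x - (2:ℝ)⁻¹ • η := by norm_num
    rw [e1, e2] at h12
    linarith
  refine ⟨?_, h2⟩
  -- Part 1
  intro x v
  obtain ⟨M, hMub⟩ := hbd
  have hM : ∀ y, ‖gradient V y‖ ≤ M := fun y => hMub (Set.mem_range_self y)
  have hM0 : 0 ≤ M := (norm_nonneg _).trans (hM 0)
  have hc : (0:ℝ) < ((2 * π : ℝ) ^ (-(3:ℝ)/2) : ℝ) := by positivity
  have hφψ : ∀ η, fourierV (⇑u) x η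
      = (((2 * π : ℝ) ^ (-(3:ℝ)/2) : ℝ) : ℂ) * psiS u x η := fun η => fourierV_eq_psiS u x η
  have hφnorm : ∀ η, ‖fourierV (⇑u) x η‖
      = ((2 * π : ℝ) ^ (-(3:ℝ)/2) : ℝ) * ‖psiS u x η‖ := by
    intro η
    rw [hφψ η, norm_mul, Complex.norm_real, Real.norm_eq_abs, abs_of_pos hc]
  have hφc : Continuous (fun η => fourierV (⇑u) x η) := by
    have h : (fun η => fourierV (⇑u) x η)
        = fun η => (((2 * π : ℝ) ^ (-(3:ℝ)/2) : ℝ) : ℂ) * psiS u x η := funext hφψ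
    rw [h]; exact continuous_const.mul (psiS u x).continuous
  -- bounds and continuity for W
  have hWb : ∀ η : E3, ∀ k : Fin 3, |Wfield (fun y => gradient V y) x η k| ≤ M := by
    intro η k
    have hb : ‖Wfield (fun y => gradient V y) x η‖ ≤ M * |(1/2 : ℝ) - (-(1/2))| :=
      intervalIntegral.norm_integral_le_of_norm_le_const fun r _ => hM _
    have hb' : ‖Wfield (fun y => gradient V y) x η‖ ≤ M := by
      rw [show |(1/2 : ℝ) - (-(1/2))| = 1 by norm_num, mul_one] at hb
      exact hb
    exact (coord_le_norm _ k).trans hb'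
  have hWc : Continuous fun η : E3 => Wfield (fun y => gradient V y) x η := by
    apply intervalIntegral.continuous_parametric_intervalIntegral_of_continuous'
    exact hE.comp (by fun_prop)
  have hWkc : ∀ k : Fin 3, Continuous fun η : E3 => Wfield (fun y => gradient V y) x η k :=
    fun k => (coord_cont k).comp hWc
  -- the amplitude functions
  set c : ℝ := ((2 * π : ℝ) ^ (-(3:ℝ)/2) : ℝ) with hcdef
  have hac : ∀ k : Fin 3, Continuous fun η : E3 =>
      ((Wfield (fun y => gradient V y) x η k : ℝ) : ℂ) * fourierV (⇑u) x η :=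
    fun k => (Complex.continuous_ofReal.comp (hWkc k)).mul hφc
  have hab : ∀ (k : Fin 3) (η : E3),
      ‖((Wfield (fun y => gradient V y) x η k : ℝ) : ℂ) * fourierV (⇑u) x η‖
        ≤ M * (c * ‖psiS u x η‖) := by
    intro k η
    rw [norm_mul, Complex.norm_real, Real.norm_eq_abs, hφnorm η]
    exact mul_le_mul_of_nonneg_right (hWb η k) (by positivity)
  have hbint : Integrable (fun η : E3 => M * (c * ‖psiS u x η‖)) :=
    ((psiS u x).integrable.norm.const_mul c).const_mul M
  have hb1int : Integrable (fun η : E3 => (M * (c * ‖psiS u x η‖)) * ‖η‖) := by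
    have h1 : Integrable (fun η : E3 => ‖η‖ * ‖psiS u x η‖) := by
      simpa using (psiS u x).integrable_pow_mul volume 1
    have h : (fun η : E3 => (M * (c * ‖psiS u x η‖)) * ‖η‖)
        = fun η : E3 => (M * c) * (‖η‖ * ‖psiS u x η‖) := by funext η; ring
    rw [h]
    exact h1.const_mul (M * c)
  -- the derivative of each Gamma component
  have hder : ∀ k : Fin 3,
      fderiv ℝ (fun v' : E3 => Gamma (fun y => gradient V y) (⇑u) k x v') v (e3 k)
        = (c : ℂ) * ∫ η : E3,
            (((Wfield (fun y => gradient V y) x η k : ℝ) : ℂ) * fourierV (⇑u) x η *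
              Complex.exp (Complex.I * ((⟪v, η⟫ : ℝ) : ℂ)) * Complex.I) * ((η k : ℝ) : ℂ) := by
    intro k
    have hmain := osc_hasFDerivAt
      (fun η => ((Wfield (fun y => gradient V y) x η k : ℝ) : ℂ) * fourierV (⇑u) x η)
      (hac k) (fun η => M * (c * ‖psiS u x η‖)) hbint (hab k) hb1int v
    have hint := osc_integrable
      (fun η => ((Wfield (fun y => gradient V y) x η k : ℝ) : ℂ) * fourierV (⇑u) x η)
      (hac k) (fun η => M * (c * ‖psiS u x η‖)) (hab k) hb1int v
    have hG : HasFDerivAt (fun v' : E3 => Gamma (fun y => gradient V y) (⇑u) k x v')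
        ((c : ℂ) • (∫ η : E3,
          (((Wfield (fun y => gradient V y) x η k : ℝ) : ℂ) * fourierV (⇑u) x η *
            Complex.exp (Complex.I * ((⟪v, η⟫ : ℝ) : ℂ)) * Complex.I) •
          (Complex.ofRealCLM.comp (innerSL ℝ η) : E3 →L[ℝ] ℂ))) v := by
      have := hmain.const_mul ((c : ℝ) : ℂ)
      exact this
    rw [hG.fderiv]
    rw [ContinuousLinearMap.smul_apply, ContinuousLinearMap.integral_apply hint]
    rw [smul_eq_mul]
    congr 1
    refine congrArg (fun f : E3 → ℂ => ∫ η : E3, f η) (funext fun η => ?_)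
    rw [ContinuousLinearMap.smul_apply, smul_eq_mul]
    congr 1
    show Complex.ofRealCLM (⟪η, e3 k⟫ : ℝ) = ((η k : ℝ) : ℂ)
    have : (⟪η, e3 k⟫ : ℝ) = η k := by
      simp [e3, EuclideanSpace.inner_single_right]
    rw [this]
    rfl
  -- assemble
  have hsumint : ∀ k : Fin 3, Integrable (fun η : E3 =>
      (((Wfield (fun y => gradient V y) x η k : ℝ) : ℂ) * fourierV (⇑u) x η *
        Complex.exp (Complex.I * ((⟪v, η⟫ : ℝ) : ℂ)) * Complex.I) * ((η k : ℝ) : ℂ)) := by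
    intro k
    apply hb1int.mono'
    · exact ((((hac k).mul (exp_cont v)).mul continuous_const).mul
        (Complex.continuous_ofReal.comp (coord_cont k))).aestronglyMeasurable
    · filter_upwards with η
      rw [norm_mul, norm_mul, norm_mul, expnorm, Complex.norm_I, mul_one, mul_one,
        Complex.norm_real, Real.norm_eq_abs]
      have h1 : 0 ≤ M * (c * ‖psiS u x η‖) := by positivity
      exact mul_le_mul (hab k η) ((coord_le_norm η k)) (abs_nonneg _) h1
  calc Theta V (⇑u) x v
      = Complex.I * (c : ℂ) *
          ∫ η : E3, ((V (x + (2:ℝ)⁻¹ • η) - V (x - (2:ℝ)⁻¹ • η) : ℝ) : ℂ) *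
            fourierV (⇑u) x η * Complex.exp (Complex.I * ((⟪v, η⟫ : ℝ) : ℂ)) := rfl
    _ = (c : ℂ) * ∫ η : E3, ∑ k : Fin 3,
          (((Wfield (fun y => gradient V y) x η k : ℝ) : ℂ) * fourierV (⇑u) x η *
            Complex.exp (Complex.I * ((⟪v, η⟫ : ℝ) : ℂ)) * Complex.I) * ((η k : ℝ) : ℂ) := by
        have hpt : ∀ η : E3, (∑ k : Fin 3,
            (((Wfield (fun y => gradient V y) x η k : ℝ) : ℂ) * fourierV (⇑u) x η *
              Complex.exp (Complex.I * ((⟪v, η⟫ : ℝ) : ℂ)) * Complex.I) * ((η k : ℝ) : ℂ))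
            = Complex.I * (((V (x + (2:ℝ)⁻¹ • η) - V (x - (2:ℝ)⁻¹ • η) : ℝ) : ℂ) *
                fourierV (⇑u) x η * Complex.exp (Complex.I * ((⟪v, η⟫ : ℝ) : ℂ))) := by
          intro η
          have hW : ((⟪η, Wfield (fun y => gradient V y) x η⟫ : ℝ) : ℂ)
              = ∑ k : Fin 3, ((η k : ℝ) : ℂ) * ((Wfield (fun y => gradient V y) x η k : ℝ) : ℂ) := by
            have hre : (⟪η, Wfield (fun y => gradient V y) x η⟫ : ℝ)
                = ∑ k : Fin 3, η k * Wfield (fun y => gradient V y) x η k := by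
              simp [PiLp.inner_apply, RCLike.inner_apply, mul_comm]
            rw [hre]
            push_cast
            rfl
          calc (∑ k : Fin 3,
              (((Wfield (fun y => gradient V y) x η k : ℝ) : ℂ) * fourierV (⇑u) x η *
                Complex.exp (Complex.I * ((⟪v, η⟫ : ℝ) : ℂ)) * Complex.I) * ((η k : ℝ) : ℂ))
              = (∑ k : Fin 3, ((η k : ℝ) : ℂ) *
                  ((Wfield (fun y => gradient V y) x η k : ℝ) : ℂ)) *
                  (fourierV (⇑u) x η * Complex.exp (Complex.I * ((⟪v, η⟫ : ℝ) : ℂ)) *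
                    Complex.I) := by
                rw [Finset.sum_mul]
                exact Finset.sum_congr rfl fun k _ => by ring
            _ = Complex.I * (((V (x + (2:ℝ)⁻¹ • η) - V (x - (2:ℝ)⁻¹ • η) : ℝ) : ℂ) *
                fourierV (⇑u) x η * Complex.exp (Complex.I * ((⟪v, η⟫ : ℝ) : ℂ))) := by
                rw [← hW, h2 x η]
                ring
        rw [congrArg (fun fn : E3 → ℂ => ∫ η : E3, fn η) (funext hpt)]
        rw [MeasureTheory.integral_const_mul]
        ring
    _ = (c : ℂ) * ∑ k : Fin 3, ∫ η : E3,
          (((Wfield (fun y => gradient V y) x η k : ℝ) : ℂ) * fourierV (⇑u) x η *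
            Complex.exp (Complex.I * ((⟪v, η⟫ : ℝ) : ℂ)) * Complex.I) * ((η k : ℝ) : ℂ) := by
        rw [integral_finset_sum Finset.univ (fun k _ => hsumint k)]
    _ = ∑ k : Fin 3,
          fderiv ℝ (fun v' : E3 => Gamma (fun y => gradient V y) (⇑u) k x v') v (e3 k) := by
        rw [Finset.mul_sum]
        exact Finset.sum_congr rfl fun k _ => (hder k).symm

end
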